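/- For any three finite strings S₁, S₂, S₃ over an alphabet α, the decoding distance satisfies the triangle inequality: d(S₁,S₃) ≤ d(S₁,S₂) + d(S₂,S₃). -/
import Mathlib


/-- Length of the longest common prefix of two lists. -/
def lcpLength {α : Type*} [DecidableEq α] : List α → List α → ℕ
  | a :: as, b :: bs => if a = b then lcpLength as bs + 1 else 0
  | _, _ => 0

/-- `lcsLength S₁ S₂` is the length of the longest common suffix of `S₁` and `S₂`. -/
def lcsLength {α : Type*} [DecidableEq α] (S₁ S₂ : List α) : ℕ :=
  lcpLength S₁.reverse S₂.reverse

/-- The decoding distance `d(S₁,S₂) = max(|S₁|,|S₂|) − x(S₁,S₂)`, where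
`x(S₁,S₂)` is the length of the longest common suffix of `S₁` and `S₂`. -/
def decodingDist {α : Type*} [DecidableEq α] (S₁ S₂ : List α) : ℕ :=
  max S₁.length S₂.length - lcsLength S₁ S₂

lemma lcpLength_le_left {α : Type*} [DecidableEq α] :
    ∀ a b : List α, lcpLength a b ≤ a.length
  | [], _ => by simp [lcpLength]
  | _ :: _, [] => by simp [lcpLength]
  | a :: as, b :: bs => by
    simp only [lcpLength, List.length_cons]
    split
    · exact Nat.succ_le_succ (lcpLength_le_left as bs)
    · omega

lemma lcpLength_le_right {α : Type*} [DecidableEq α] :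
    ∀ a b : List α, lcpLength a b ≤ b.length
  | [], _ => by simp [lcpLength]
  | _ :: _, [] => by simp [lcpLength]
  | a :: as, b :: bs => by
    simp only [lcpLength, List.length_cons]
    split
    · exact Nat.succ_le_succ (lcpLength_le_right as bs)
    · omega

lemma min_lcp_le {α : Type*} [DecidableEq α] :
    ∀ a b c : List α, min (lcpLength a b) (lcpLength b c) ≤ lcpLength a c
  | [], _, _ => by simp [lcpLength]
  | _ :: _, [], _ => by simp [lcpLength]
  | _ :: _, _ :: _, [] => by simp [lcpLength]
  | a :: as, b :: bs, c :: cs => by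
    by_cases hab : a = b
    · by_cases hbc : b = c
      · have hac : a = c := hab.trans hbc
        have := min_lcp_le as bs cs
        simp only [lcpLength, if_pos hab, if_pos hbc, if_pos hac]
        omega
      · simp [lcpLength, hab, hbc]
    · simp [lcpLength, hab]

/-- Triangle inequality for the decoding distance. -/
theorem decodingDist_triangle {α : Type*} [DecidableEq α] (S₁ S₂ S₃ : List α) :
    decodingDist S₁ S₃ ≤ decodingDist S₁ S₂ + decodingDist S₂ S₃ := by
  unfold decodingDist lcsLength
  have h12l := lcpLength_le_left S₁.reverse S₂.reverse
  have h12r := lcpLength_le_right S₁.reverse S₂.reverse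
  have h23l := lcpLength_le_left S₂.reverse S₃.reverse
  have h23r := lcpLength_le_right S₂.reverse S₃.reverse
  have hmin := min_lcp_le S₁.reverse S₂.reverse S₃.reverse
  simp only [List.length_reverse] at *
  omega
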